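/- arXiv:2310.20346 — 9 statements merged into one kernel-verified Lean document; each statement's English description precedes it below -/
import Mathlib

section
/- Let H be a Hilbert space densely embedded in a Banach space X with embedding norm at most 1, and let φ be a nonzero vector of H that lies in X* with ‖φ‖_X · ‖φ‖_{X*} = ‖φ‖_H². Then for every f ∈ H with ⟪f, φ⟫ = 0 one has ‖φ + f‖_X ≥ ‖φ‖_X. -/
/-- If φ ∈ H is nonzero, lies in X* and `‖φ‖_X ⬝ ‖φ‖_{X*} = ‖φ‖_H²`, then
`‖φ + f‖_X ≥ ‖φ‖_X` for every f ⊥ φ; i.e., φ is a Hilbert point in X. -/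
theorem hilbert_point_of_dual_norm_product
    {H X : Type*} [NormedAddCommGroup H] [InnerProductSpace ℂ H] [CompleteSpace H]
    [NormedAddCommGroup X] [NormedSpace ℂ X] [CompleteSpace X]
    (i : H →ₗ[ℂ] X) (hinj : Function.Injective i) (hdense : DenseRange i)
    (hcontr : ∀ f : H, ‖i f‖ ≤ ‖f‖)
    (φ : H) (hφ : φ ≠ 0)
    (Φ : X →L[ℂ] ℂ) (hΦ : ∀ f : H, Φ (i f) = @inner ℂ H _ φ f)
    (hnorm : ‖i φ‖ * ‖Φ‖ = ‖φ‖ ^ 2) :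
    ∀ f : H, @inner ℂ H _ f φ = 0 → ‖i φ‖ ≤ ‖i (φ + f)‖ := by
  intro f hf
  have hφpos : (0 : ℝ) < ‖φ‖ ^ 2 := by
    have := norm_pos_iff.mpr hφ
    positivity
  have hΦpos : (0 : ℝ) < ‖Φ‖ := by
    by_contra h
    have : ‖Φ‖ = 0 := le_antisymm (not_lt.mp h) (norm_nonneg _)
    rw [this, mul_zero] at hnorm
    linarith
  have hval : Φ (i (φ + f)) = (‖φ‖ : ℂ) ^ 2 := by
    rw [hΦ, inner_add_right]
    have : @inner ℂ H _ φ f = 0 := by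
      rw [← inner_conj_symm, hf, map_zero]
    rw [this, add_zero, inner_self_eq_norm_sq_to_K]
    norm_cast
  have hle : ‖φ‖ ^ 2 ≤ ‖Φ‖ * ‖i (φ + f)‖ := by
    have := Φ.le_opNorm (i (φ + f))
    rw [hval] at this
    simpa [pow_two, abs_of_nonneg (norm_nonneg φ)] using this
  rw [← hnorm] at hle
  have : ‖i φ‖ * ‖Φ‖ ≤ ‖i (φ + f)‖ * ‖Φ‖ := by linarith
  exact le_of_mul_le_mul_right this hΦpos
end

section
/- Let H be a Hilbert space densely embedded in a Banach space X with embedding norm at most 1, and suppose the nonzero vector φ ∈ H satisfies ‖φ + f‖_X ≥ ‖φ‖_X for every f ∈ H with ⟪f, φ⟫ = 0. Then φ lies in X* and ‖φ‖_X · ‖φ‖_{X*} = ‖φ‖_H². -/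
/-- If the nonzero vector φ ∈ H is a Hilbert point in X, then φ lies in X*
and `‖φ‖_X ⬝ ‖φ‖_{X*} = ‖φ‖_H²`. -/
theorem dual_norm_product_of_hilbert_point
    {H X : Type*} [NormedAddCommGroup H] [InnerProductSpace ℂ H] [CompleteSpace H]
    [NormedAddCommGroup X] [NormedSpace ℂ X] [CompleteSpace X]
    (i : H →ₗ[ℂ] X) (hinj : Function.Injective i) (hdense : DenseRange i)
    (hcontr : ∀ f : H, ‖i f‖ ≤ ‖f‖)
    (φ : H) (hφ : φ ≠ 0)
    (hpoint : ∀ f : H, @inner ℂ H _ f φ = 0 → ‖i φ‖ ≤ ‖i (φ + f)‖) :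
    ∃ Φ : X →L[ℂ] ℂ, (∀ f : H, Φ (i f) = @inner ℂ H _ φ f) ∧ ‖i φ‖ * ‖Φ‖ = ‖φ‖ ^ 2 := by
  have hiφ : i φ ≠ 0 := fun h => hφ (hinj (by simpa using h))
  have hiφpos : 0 < ‖i φ‖ := norm_pos_iff.mpr hiφ
  set M : ℝ := ‖φ‖ ^ 2 / ‖i φ‖ with hM
  have hMnn : 0 ≤ M := div_nonneg (by positivity) hiφpos.le
  -- key inequality
  have key : ∀ f : H, ‖(inner ℂ φ f : ℂ)‖ ≤ M * ‖i f‖ := by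
    intro f
    by_cases h0 : (inner ℂ f φ : ℂ) = 0
    · have hφf : (inner ℂ φ f : ℂ) = 0 := by rw [← inner_conj_symm, h0, map_zero]
      rw [hφf]
      simpa using mul_nonneg hMnn (norm_nonneg (i f))
    · have hφn : (‖φ‖ : ℂ) ≠ 0 := by
        exact_mod_cast norm_ne_zero_iff.mpr hφ
      set c : ℂ := (inner ℂ f φ : ℂ) / (‖φ‖ : ℂ) ^ 2 with hc
      have hc0 : c ≠ 0 := by
        simp only [hc, div_ne_zero_iff]
        exact ⟨h0, pow_ne_zero 2 hφn⟩
      have hφ2 : (inner ℂ f φ : ℂ) = c * (‖φ‖ : ℂ) ^ 2 := by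
        rw [hc]; field_simp
      set g : H := ((starRingEnd ℂ) c)⁻¹ • f - φ with hg
      have hgφ : (inner ℂ g φ : ℂ) = 0 := by
        rw [hg, inner_sub_left, inner_smul_left, inner_self_eq_norm_sq_to_K, hφ2]
        rw [map_inv₀, RingHomCompTriple.comp_apply]
        simp only [RingHom.id_apply]
        field_simp
        exact sub_eq_zero.mpr rfl
      have h1 : ‖i φ‖ ≤ ‖i (φ + g)‖ := hpoint g hgφ
      have h2 : i (φ + g) = ((starRingEnd ℂ) c)⁻¹ • i f := by
        rw [hg]; simp [map_smul]
      have h3 : ‖c‖ * ‖i φ‖ ≤ ‖i f‖ := by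
        rw [h2, norm_smul, norm_inv, RCLike.norm_conj] at h1
        rw [mul_comm]
        rw [← le_div_iff₀ (norm_pos_iff.mpr hc0)]
        simpa [div_eq_inv_mul] using h1
      have h4 : ‖(inner ℂ φ f : ℂ)‖ = ‖c‖ * ‖φ‖ ^ 2 := by
        rw [← inner_conj_symm, RCLike.norm_conj, hφ2]
        simp [norm_mul]
      rw [h4, hM, div_mul_eq_mul_div, le_div_iff₀ hiφpos]
      calc ‖c‖ * ‖φ‖ ^ 2 * ‖i φ‖ = ‖φ‖ ^ 2 * (‖c‖ * ‖i φ‖) := by ring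
        _ ≤ ‖φ‖ ^ 2 * ‖i f‖ := mul_le_mul_of_nonneg_left h3 (by positivity)
  -- build the functional on the range submodule
  set S : Submodule ℂ X := LinearMap.range i with hS
  let e : H ≃ₗ[ℂ] S := LinearEquiv.ofInjective i hinj
  let ψ₀ : S →ₗ[ℂ] ℂ := (innerSL ℂ φ).toLinearMap.comp e.symm.toLinearMap
  have hψ₀ : ∀ x : S, ‖ψ₀ x‖ ≤ M * ‖x‖ := by
    intro x
    have hx : i (e.symm x) = (x : X) := by
      have h := LinearEquiv.ofInjective_apply (h := hinj) (x := e.symm x)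
      have h2 : e (e.symm x) = x := e.apply_symm_apply x
      rw [← h, h2]
    have := key (e.symm x)
    simpa [ψ₀, hx] using this
  let ψ : S →L[ℂ] ℂ := ψ₀.mkContinuous M hψ₀
  have hψf : ∀ f : H, ψ (e f) = (inner ℂ φ f : ℂ) := by
    intro f
    simp [ψ, ψ₀, LinearMap.mkContinuous_apply]
  have hψnorm : ‖ψ‖ ≤ M := LinearMap.mkContinuous_norm_le _ hMnn _
  -- extend along the dense inclusion S → X
  have hdense' : DenseRange (S.subtypeL : S →L[ℂ] X) := by
    have : Set.range (S.subtypeL : S →L[ℂ] X) = (S : Set X) := Subtype.range_coe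
    rw [DenseRange, this]
    exact hdense.mono (fun x hx => by
      obtain ⟨f, rfl⟩ := hx; exact ⟨f, rfl⟩)
  have hbound : ∀ x : S, ‖x‖ ≤ (1 : NNReal) * ‖(S.subtypeL : S →L[ℂ] X) x‖ := by
    intro x; simp
  have huni : IsUniformInducing (S.subtypeL : S →L[ℂ] X) :=
    (ContinuousLinearMap.isUniformEmbedding_of_bound _ hbound).isUniformInducing
  let Φ : X →L[ℂ] ℂ := ψ.extend (S.subtypeL)
  have hΦf : ∀ f : H, Φ (i f) = (inner ℂ φ f : ℂ) := by
    intro f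
    have hx : (S.subtypeL : S →L[ℂ] X) (e f) = i f := by
      exact LinearEquiv.ofInjective_apply (h := hinj) i f
    have := ContinuousLinearMap.extend_eq ψ hdense' huni (e f)
    rw [hx] at this
    rw [this, hψf]
  refine ⟨Φ, hΦf, ?_⟩
  have hΦle : ‖Φ‖ ≤ M := by
    have := ContinuousLinearMap.opNorm_extend_le ψ hdense' hbound
    calc ‖Φ‖ ≤ (1 : NNReal) * ‖ψ‖ := this
      _ = ‖ψ‖ := by simp
      _ ≤ M := hψnorm
  have hge : ‖φ‖ ^ 2 ≤ ‖i φ‖ * ‖Φ‖ := by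
    have h1 : Φ (i φ) = (‖φ‖ : ℂ) ^ 2 := by
      rw [hΦf φ, inner_self_eq_norm_sq_to_K]; norm_cast
    have h2 : ‖Φ (i φ)‖ ≤ ‖Φ‖ * ‖i φ‖ := Φ.le_opNorm _
    rw [h1] at h2
    have h3 : ‖((‖φ‖ : ℂ)) ^ 2‖ = ‖φ‖ ^ 2 := by
      rw [norm_pow, Complex.norm_real, Real.norm_eq_abs, abs_of_nonneg (norm_nonneg φ)]
    rw [h3] at h2
    linarith [h2, mul_comm ‖Φ‖ ‖i φ‖]
  have hle : ‖i φ‖ * ‖Φ‖ ≤ ‖φ‖ ^ 2 := by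
    calc ‖i φ‖ * ‖Φ‖ ≤ ‖i φ‖ * M := mul_le_mul_of_nonneg_left hΦle hiφpos.le
      _ = ‖φ‖ ^ 2 := by rw [hM]; field_simp [hiφpos.ne']
  linarith
end

section
/- Let H be a Hilbert space densely embedded in a Banach space X with embedding norm at most 1. If φ ∈ H is nonzero with ‖φ‖_X = ‖φ‖_H, then ‖φ + f‖_X ≥ ‖φ‖_X for every f ∈ H with ⟪f, φ⟫ = 0 (i.e., norm attaining vectors are Hilbert points). -/
/-- Norm attaining vectors are Hilbert points: if `‖φ‖_X = ‖φ‖_H` for a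
nonzero φ ∈ H, then `‖φ + f‖_X ≥ ‖φ‖_X` for all f ∈ H with ⟪f, φ⟫ = 0. -/
theorem hilbert_point_of_norm_attaining
    {H X : Type*} [NormedAddCommGroup H] [InnerProductSpace ℂ H] [CompleteSpace H]
    [NormedAddCommGroup X] [NormedSpace ℂ X] [CompleteSpace X]
    (i : H →ₗ[ℂ] X) (hinj : Function.Injective i) (hdense : DenseRange i)
    (hcontr : ∀ f : H, ‖i f‖ ≤ ‖f‖)
    (φ : H) (hφ : φ ≠ 0)
    (hattain : ‖i φ‖ = ‖φ‖) :
    ∀ f : H, @inner ℂ H _ f φ = 0 → ‖i φ‖ ≤ ‖i (φ + f)‖ := by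
  intro f hf
  have hiφ : i φ ≠ 0 := fun h => hφ (hinj (by simpa using h))
  obtain ⟨x, hx1, hx2⟩ := exists_dual_vector ℂ (i φ) (norm_ne_zero_iff.mpr hiφ)
  -- define ψ = x ∘ i as a continuous linear functional on H with norm ≤ 1
  set ψ : H →L[ℂ] ℂ :=
    LinearMap.mkContinuous (x.toLinearMap.comp i) 1 (by
      intro v
      calc ‖x (i v)‖ ≤ ‖x‖ * ‖i v‖ := x.le_opNorm _
        _ = ‖i v‖ := by rw [hx1, one_mul]
        _ ≤ 1 * ‖v‖ := by simpa using hcontr v) with hψdef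
  have hψnorm : ‖ψ‖ ≤ 1 := LinearMap.mkContinuous_norm_le _ zero_le_one _
  have hψapp : ∀ v : H, ψ v = x (i v) := fun v => rfl
  set g : H := (InnerProductSpace.toDual ℂ H).symm ψ with hg
  have hgv : ∀ v : H, (inner ℂ g v : ℂ) = ψ v := fun v =>
    InnerProductSpace.toDual_symm_apply
  have hgnorm : ‖g‖ ≤ 1 := by
    rw [hg]; simpa using hψnorm
  have hgφ : (inner ℂ g φ : ℂ) = (‖φ‖ : ℂ) := by
    rw [hgv, hψapp, hx2, hattain]; norm_cast
  have hgφge : ‖φ‖ ≤ ‖g‖ * ‖φ‖ := by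
    have := norm_inner_le_norm (𝕜 := ℂ) g φ
    rw [hgφ] at this
    simpa using this
  have hφpos : (0:ℝ) < ‖φ‖ := norm_pos_iff.mpr hφ
  have hgnorm1 : ‖g‖ = 1 := by
    have h1 : 1 ≤ ‖g‖ := by nlinarith
    linarith
  -- equality in Cauchy-Schwarz: ‖φ‖ • g = ‖g‖ • φ
  have heq : (‖φ‖ : ℂ) • g = (‖g‖ : ℂ) • φ :=
    (inner_eq_norm_mul_iff (𝕜 := ℂ) (x := g) (y := φ)).mp (by
      rw [hgφ, hgnorm1]; simp)
  have hgf : (inner ℂ g f : ℂ) = 0 := by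
    have h1 : (inner ℂ ((‖φ‖ : ℂ) • g) f : ℂ) = (inner ℂ ((‖g‖ : ℂ) • φ) f : ℂ) := by
      rw [heq]
    rw [inner_smul_left, inner_smul_left] at h1
    have h2 : (inner ℂ φ f : ℂ) = 0 := by
      have := inner_conj_symm (𝕜 := ℂ) φ f
      rw [hf] at this
      simpa using this.symm
    rw [h2, mul_zero] at h1
    have hc : ((starRingEnd ℂ) ((‖φ‖ : ℂ))) ≠ 0 := by
      simp [hφpos.ne']
    rcases mul_eq_zero.mp h1 with h | h
    · exact absurd h hc
    · exact h
  have hψφf : ψ (φ + f) = (‖φ‖ : ℂ) := by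
    rw [← hgv, inner_add_right, hgφ, hgf, add_zero]
  have : ‖φ‖ ≤ ‖i (φ + f)‖ := by
    calc ‖φ‖ = ‖ψ (φ + f)‖ := by rw [hψφf]; simp
      _ = ‖x (i (φ + f))‖ := by rw [hψapp]
      _ ≤ ‖x‖ * ‖i (φ + f)‖ := x.le_opNorm _
      _ = ‖i (φ + f)‖ := by rw [hx1, one_mul]
  rw [hattain]; exact this
end

section
/- The equation (α/2)·√(4 − α²) = arcsin(α/2) on the interval [0, 2] has exactly two solutions: α = 0 and a unique α₀ ∈ (0, 2), and this α₀ satisfies 1.62 < α₀ < 1.63. -/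
open Real Set

noncomputable def gfun (α : ℝ) : ℝ := α / 2 * Real.sqrt (4 - α ^ 2) - Real.arcsin (α / 2)

lemma gfun_hasDerivAt {α : ℝ} (h1 : -2 < α) (h2 : α < 2) :
    HasDerivAt gfun ((1 - α ^ 2) / Real.sqrt (4 - α ^ 2)) α := by
  have hs : (0:ℝ) < 4 - α ^ 2 := by nlinarith
  have hsq : 0 < Real.sqrt (4 - α ^ 2) := Real.sqrt_pos.2 hs
  have hs2 : Real.sqrt (4 - α ^ 2) ^ 2 = 4 - α ^ 2 := Real.sq_sqrt hs.le
  have d1 : HasDerivAt (fun x : ℝ => 4 - x ^ 2) (-(2 * α)) α := by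
    simpa using (hasDerivAt_pow 2 α).const_sub 4
  have d2 : HasDerivAt (fun x : ℝ => Real.sqrt (4 - x ^ 2))
      (1 / (2 * Real.sqrt (4 - α ^ 2)) * -(2 * α)) α :=
    (Real.hasDerivAt_sqrt hs.ne').comp α d1
  have d3 : HasDerivAt (fun x : ℝ => x / 2) (1 / 2) α := (hasDerivAt_id α).div_const 2
  have d4 := d3.mul d2
  have h1' : α / 2 ≠ -1 := by intro h; nlinarith [h]
  have h2' : α / 2 ≠ 1 := by intro h; nlinarith [h]
  have d5 : HasDerivAt (fun x : ℝ => Real.arcsin (x / 2))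
      (1 / Real.sqrt (1 - (α / 2) ^ 2) * (1 / 2)) α :=
    HasDerivAt.comp (h₂ := Real.arcsin) α (Real.hasDerivAt_arcsin h1' h2') d3
  have hq : Real.sqrt (1 - (α / 2) ^ 2) = Real.sqrt (4 - α ^ 2) / 2 := by
    rw [show (1 - (α / 2) ^ 2) = (4 - α ^ 2) / 4 by ring, show (4:ℝ) = 2 ^ 2 by norm_num,
      Real.sqrt_div' , Real.sqrt_sq (by norm_num : (0:ℝ) ≤ 2)]
    norm_num
  have := d4.sub d5
  refine this.congr_deriv ?_
  rw [hq]
  field_simp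
  nlinarith [hs2, hsq]

lemma sin095 : (0.81:ℝ) < Real.sin 0.95 := by
  have hb := Real.sin_bound (x := 0.95/3) (by rw [abs_of_nonneg] <;> norm_num)
  rw [abs_of_nonneg (by norm_num : (0:ℝ) ≤ 0.95/3), abs_sub_le_iff] at hb
  obtain ⟨hb1, hb2⟩ := hb
  set s := Real.sin (0.95/3) with hs
  have h3 : Real.sin 0.95 = 3 * s - 4 * s ^ 3 := by
    rw [show (0.95:ℝ) = 3 * (0.95/3) by norm_num, Real.sin_three_mul]
  rw [h3]
  have hlo : (0.31085:ℝ) ≤ s := by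
    nlinarith
  have hhi : s ≤ 0.31190 := by
    nlinarith
  nlinarith [sq_nonneg (s - 0.31085), sq_nonneg (s - 0.31190), mul_pos (by linarith : (0:ℝ) < s) (by linarith : (0:ℝ) < s)]

lemma sin0945 : Real.sin 0.945 < 0.815 := by
  have hb := Real.sin_bound (x := 0.945/3) (by rw [abs_of_nonneg] <;> norm_num)
  rw [abs_of_nonneg (by norm_num : (0:ℝ) ≤ 0.945/3), abs_sub_le_iff] at hb
  obtain ⟨hb1, hb2⟩ := hb
  set s := Real.sin (0.945/3) with hs
  have h3 : Real.sin 0.945 = 3 * s - 4 * s ^ 3 := by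
    rw [show (0.945:ℝ) = 3 * (0.945/3) by norm_num, Real.sin_three_mul]
  rw [h3]
  have hlo : (0.30922:ℝ) ≤ s := by
    nlinarith
  have hhi : s ≤ 0.31031 := by
    nlinarith
  nlinarith [sq_nonneg (s - 0.30922), sq_nonneg (s - 0.31031), mul_pos (by linarith : (0:ℝ) < s) (by linarith : (0:ℝ) < s)]

lemma gfun_cont : Continuous gfun := by
  unfold gfun
  exact ((continuous_id.div_const 2).mul
    (Real.continuous_sqrt.comp (continuous_const.sub (continuous_pow 2)))).sub
    (Real.continuous_arcsin.comp (continuous_id.div_const 2))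

lemma gmono : StrictMonoOn gfun (Set.Icc (0:ℝ) 1) := by
  apply strictMonoOn_of_deriv_pos (convex_Icc _ _) gfun_cont.continuousOn
  intro x hx
  rw [interior_Icc] at hx
  rw [(gfun_hasDerivAt (by linarith [hx.1]) (by linarith [hx.2])).deriv]
  exact div_pos (by nlinarith [hx.1, hx.2]) (Real.sqrt_pos.2 (by nlinarith [hx.1, hx.2]))

lemma ganti : StrictAntiOn gfun (Set.Icc (1:ℝ) 2) := by
  apply strictAntiOn_of_deriv_neg (convex_Icc _ _) gfun_cont.continuousOn
  intro x hx
  rw [interior_Icc] at hx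
  rw [(gfun_hasDerivAt (by linarith [hx.1]) (by linarith [hx.2])).deriv]
  exact div_neg_of_neg_of_pos (by nlinarith [hx.1]) (Real.sqrt_pos.2 (by nlinarith [hx.1, hx.2]))

lemma gzero : gfun 0 = 0 := by simp [gfun]

lemma ga : 0 < gfun 1.62 := by
  unfold gfun
  have harc : Real.arcsin (1.62/2) < 0.95 := by
    have h95 : Real.arcsin (Real.sin 0.95) = 0.95 := by
      have := Real.pi_gt_three
      exact Real.arcsin_sin (by linarith) (by linarith)
    calc Real.arcsin (1.62/2) < Real.arcsin (Real.sin 0.95) := by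
          apply Real.strictMonoOn_arcsin ⟨by norm_num, by norm_num⟩
            ⟨Real.neg_one_le_sin _, Real.sin_le_one _⟩
          norm_num [sin095.le]
          linarith [sin095]
      _ = 0.95 := h95
  have hsq : Real.sqrt (4 - 1.62^2) ^ 2 = 4 - 1.62^2 := Real.sq_sqrt (by norm_num)
  have hnn : 0 ≤ Real.sqrt (4 - 1.62^2) := Real.sqrt_nonneg _
  nlinarith [sq_nonneg (Real.sqrt (4 - 1.62^2) - 95/81)]

lemma gb : gfun 1.63 < 0 := by
  unfold gfun
  have harc : (0.945:ℝ) < Real.arcsin (1.63/2) := by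
    have h945 : Real.arcsin (Real.sin 0.945) = 0.945 := by
      have := Real.pi_gt_three
      exact Real.arcsin_sin (by linarith) (by linarith)
    calc (0.945:ℝ) = Real.arcsin (Real.sin 0.945) := h945.symm
      _ < Real.arcsin (1.63/2) := by
          apply Real.strictMonoOn_arcsin ⟨Real.neg_one_le_sin _, Real.sin_le_one _⟩
            ⟨by norm_num, by norm_num⟩
          linarith [sin0945]
  have hsq : Real.sqrt (4 - 1.63^2) ^ 2 = 4 - 1.63^2 := Real.sq_sqrt (by norm_num)
  have hnn : 0 ≤ Real.sqrt (4 - 1.63^2) := Real.sqrt_nonneg _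
  nlinarith [sq_nonneg (Real.sqrt (4 - 1.63^2) - 189/163)]

/-- The equation `(α/2)·√(4 − α²) = arcsin(α/2)` on `[0, 2]` has exactly the
solutions `α = 0` and a unique `α₀ ∈ (0, 2)`, with `1.62 < α₀ < 1.63`. -/
theorem unique_positive_solution :
    ∃ α₀ : ℝ, α₀ ∈ Set.Ioo (0 : ℝ) 2 ∧
      (α₀ / 2) * Real.sqrt (4 - α₀ ^ 2) = Real.arcsin (α₀ / 2) ∧
      1.62 < α₀ ∧ α₀ < 1.63 ∧
      ∀ α ∈ Set.Icc (0 : ℝ) 2,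
        ((α / 2) * Real.sqrt (4 - α ^ 2) = Real.arcsin (α / 2) ↔ α = 0 ∨ α = α₀) := by
  have hivt : (0:ℝ) ∈ Set.Ioo (gfun 1.63) (gfun 1.62) := ⟨gb, ga⟩
  have hsub := intermediate_value_Ioo' (by norm_num : (1.62:ℝ) ≤ 1.63)
    gfun_cont.continuousOn
  obtain ⟨α₀, hα₀mem, hα₀⟩ := hsub hivt
  obtain ⟨hl, hr⟩ := hα₀mem
  refine ⟨α₀, ⟨by linarith, by linarith⟩, ?_, hl, hr, ?_⟩
  · have := sub_eq_zero.mpr hα₀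
    unfold gfun at hα₀
    linarith [hα₀]
  · intro α ⟨ha0, ha2⟩
    constructor
    · intro heq
      have hg : gfun α = 0 := by unfold gfun; linarith [heq]
      by_contra hcon
      push_neg at hcon
      obtain ⟨hne0, hneα₀⟩ := hcon
      have hpos : 0 < α := lt_of_le_of_ne ha0 (Ne.symm hne0)
      rcases le_or_gt α 1 with h1 | h1
      · have := gmono ⟨le_refl 0, by norm_num⟩ ⟨ha0, h1⟩ hpos
        rw [gzero, hg] at this
        exact lt_irrefl 0 this
      · exact hneα₀ (ganti.injOn ⟨h1.le, ha2⟩ ⟨by linarith, by linarith⟩ (by rw [hg, hα₀]))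
    · rintro (rfl | rfl)
      · simp
      · unfold gfun at hα₀; linarith [hα₀]
end

section
/- For α ≥ 0, the integral (1/(2π)) ∫₀^{2π} |α + 2 cos θ| dθ equals (2/π)·(α·arcsin(α/2) + √(4 − α²)) when 0 ≤ α ≤ 2, and equals α when α > 2. -/
open Real intervalIntegral

lemma key (α a b : ℝ) : ∫ θ in a..b, (α + 2 * Real.cos θ) = α*(b-a) + 2*(Real.sin b - Real.sin a) := by
  rw [intervalIntegral.integral_add (intervalIntegrable_const) ((intervalIntegrable_cos).const_mul 2),
    intervalIntegral.integral_const, intervalIntegral.integral_const_mul, integral_cos, smul_eq_mul]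
  ring

lemma intble (α a b : ℝ) : IntervalIntegrable (fun θ => |α + 2 * Real.cos θ|) MeasureTheory.volume a b :=
  Continuous.intervalIntegrable (by fun_prop) a b

/-- `(1/(2π)) ∫₀^{2π} |α + 2cos θ| dθ = (2/π)(α arcsin(α/2) + √(4 − α²))`
for `0 ≤ α ≤ 2`, and equals `α` for `α > 2`. -/
theorem integral_abs_alpha_add_two_cos (α : ℝ) (hα : 0 ≤ α) :
    (α ≤ 2 →
      (1 / (2 * Real.pi)) * ∫ θ in (0:ℝ)..(2 * Real.pi), |α + 2 * Real.cos θ|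
        = (2 / Real.pi) * (α * Real.arcsin (α / 2) + Real.sqrt (4 - α ^ 2))) ∧
    (2 < α →
      (1 / (2 * Real.pi)) * ∫ θ in (0:ℝ)..(2 * Real.pi), |α + 2 * Real.cos θ| = α) := by
  have hpi := Real.pi_pos
  constructor
  · intro h2
    set t := Real.arccos (-(α/2)) with ht
    have hm1 : (-1:ℝ) ≤ -(α/2) := by linarith
    have hm2 : -(α/2) ≤ 1 := by linarith
    have hct : Real.cos t = -(α/2) := Real.cos_arccos hm1 hm2
    have ht0 : 0 ≤ t := Real.arccos_nonneg _
    have htpi : t ≤ Real.pi := Real.arccos_le_pi _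
    have h4 : (0:ℝ) ≤ 4 - α^2 := by nlinarith
    have hst : Real.sin t = Real.sqrt (4 - α^2) / 2 := by
      rw [ht, Real.sin_arccos,
        show (1 : ℝ) - (-(α/2))^2 = (Real.sqrt (4 - α^2) / 2)^2 by
          rw [div_pow, Real.sq_sqrt h4]; ring]
      exact Real.sqrt_sq (by positivity)
    have htv : t = Real.pi/2 + Real.arcsin (α/2) := by
      rw [ht, Real.arccos_neg, Real.arccos]; ring
    -- split the integral
    have hsplit : (∫ θ in (0:ℝ)..(2*Real.pi), |α + 2 * Real.cos θ|)
        = (∫ θ in (0:ℝ)..t, |α + 2 * Real.cos θ|)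
          + (∫ θ in t..Real.pi, |α + 2 * Real.cos θ|)
          + (∫ θ in Real.pi..(2*Real.pi - t), |α + 2 * Real.cos θ|)
          + (∫ θ in (2*Real.pi - t)..(2*Real.pi), |α + 2 * Real.cos θ|) := by
      have e1 := integral_add_adjacent_intervals (intble α 0 t) (intble α t Real.pi)
      have e2 := integral_add_adjacent_intervals (intble α 0 Real.pi) (intble α Real.pi (2*Real.pi - t))
      have e3 := integral_add_adjacent_intervals (intble α 0 (2*Real.pi - t)) (intble α (2*Real.pi - t) (2*Real.pi))
      linarith
    -- piece 1
    have hP1 : (∫ θ in (0:ℝ)..t, |α + 2 * Real.cos θ|) = α*(t-0) + 2*(Real.sin t - Real.sin 0) := by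
      rw [← key α 0 t]
      apply intervalIntegral.integral_congr
      intro θ hθ
      rw [Set.uIcc_of_le ht0] at hθ
      have : Real.cos t ≤ Real.cos θ :=
        Real.cos_le_cos_of_nonneg_of_le_pi hθ.1 htpi hθ.2
      exact abs_of_nonneg (by rw [hct] at this; linarith)
    -- piece 2
    have hP2 : (∫ θ in t..Real.pi, |α + 2 * Real.cos θ|)
        = -(α*(Real.pi - t) + 2*(Real.sin Real.pi - Real.sin t)) := by
      rw [show -(α*(Real.pi - t) + 2*(Real.sin Real.pi - Real.sin t)) = -∫ θ in t..Real.pi, (α + 2*Real.cos θ) by rw [key], ← intervalIntegral.integral_neg]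
      apply intervalIntegral.integral_congr
      intro θ hθ
      rw [Set.uIcc_of_le htpi] at hθ
      have : Real.cos θ ≤ Real.cos t :=
        Real.cos_le_cos_of_nonneg_of_le_pi ht0 hθ.2 hθ.1
      rw [hct] at this
      simp [abs_of_nonpos (by linarith : α + 2 * Real.cos θ ≤ 0)]
    -- piece 3
    have hP3 : (∫ θ in Real.pi..(2*Real.pi - t), |α + 2 * Real.cos θ|)
        = -(α*((2*Real.pi - t) - Real.pi) + 2*(Real.sin (2*Real.pi - t) - Real.sin Real.pi)) := by
      rw [show -(α*((2*Real.pi - t) - Real.pi) + 2*(Real.sin (2*Real.pi - t) - Real.sin Real.pi)) = -∫ θ in Real.pi..(2*Real.pi - t), (α + 2*Real.cos θ) by rw [key], ← intervalIntegral.integral_neg]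
      apply intervalIntegral.integral_congr
      intro θ hθ
      rw [Set.uIcc_of_le (by linarith : Real.pi ≤ 2*Real.pi - t)] at hθ
      have h1 : Real.cos θ = Real.cos (2*Real.pi - θ) := (Real.cos_two_pi_sub θ).symm
      have : Real.cos (2*Real.pi - θ) ≤ Real.cos t :=
        Real.cos_le_cos_of_nonneg_of_le_pi ht0 (by linarith [hθ.1]) (by linarith [hθ.2])
      rw [← h1, hct] at this
      simp [abs_of_nonpos (by linarith : α + 2 * Real.cos θ ≤ 0)]
    -- piece 4
    have hP4 : (∫ θ in (2*Real.pi - t)..(2*Real.pi), |α + 2 * Real.cos θ|)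
        = α*(2*Real.pi - (2*Real.pi - t)) + 2*(Real.sin (2*Real.pi) - Real.sin (2*Real.pi - t)) := by
      rw [← key α (2*Real.pi - t) (2*Real.pi)]
      apply intervalIntegral.integral_congr
      intro θ hθ
      rw [Set.uIcc_of_le (by linarith : 2*Real.pi - t ≤ 2*Real.pi)] at hθ
      have h1 : Real.cos θ = Real.cos (2*Real.pi - θ) := (Real.cos_two_pi_sub θ).symm
      have : Real.cos t ≤ Real.cos (2*Real.pi - θ) :=
        Real.cos_le_cos_of_nonneg_of_le_pi (by linarith [hθ.2]) htpi (by linarith [hθ.1])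
      rw [← h1, hct] at this
      exact abs_of_nonneg (by linarith)
    rw [hsplit, hP1, hP2, hP3, hP4]
    rw [Real.sin_two_pi, Real.sin_pi, Real.sin_zero,
      show Real.sin (2*Real.pi - t) = -Real.sin t by
        rw [Real.sin_sub]; simp [Real.sin_two_pi, Real.cos_two_pi],
      hst, htv]
    field_simp
    ring
  · intro h2
    have hpos : ∀ θ ∈ Set.uIcc (0:ℝ) (2*Real.pi), |α + 2 * Real.cos θ| = α + 2 * Real.cos θ := by
      intro θ _
      exact abs_of_nonneg (by nlinarith [Real.neg_one_le_cos θ])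
    rw [intervalIntegral.integral_congr hpos, key, Real.sin_two_pi, Real.sin_zero]
    field_simp
    ring
end

section
/- For α ≥ 0, the operator norm of the real 2×2 matrix [[1, α], [α, 1]] equals 1 + α, and the operator norm (largest singular value) of the 1×3 matrix [1, α, 1] equals √(2 + α²). Consequently the 6×6 matrix with blocks [[0,0,0,1,α,1],[0,1,α,0,0,0],[0,α,1,0,0,0],[1,0,0,0,0,0],[α,0,0,0,0,0],[1,0,0,0,0,0]] has operator norm max(√(2 + α²), 1 + α). -/
open scoped Matrix

/-- Operator norm of a real matrix, with respect to the Euclidean norms. -/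
noncomputable def euclideanOpNorm {m n : ℕ} (M : Matrix (Fin m) (Fin n) ℝ) : ℝ :=
  ‖LinearMap.toContinuousLinearMap (Matrix.toEuclideanLin M)‖

lemma norm_toEuclideanLin_apply' {m n : ℕ} (M : Matrix (Fin m) (Fin n) ℝ)
    (x : EuclideanSpace ℝ (Fin n)) :
    ‖LinearMap.toContinuousLinearMap (Matrix.toEuclideanLin M) x‖
      = Real.sqrt (∑ i, (M.mulVec (fun j => x j) i) ^ 2) := by
  rw [LinearMap.coe_toContinuousLinearMap', Matrix.toEuclideanLin_apply,
    EuclideanSpace.norm_eq]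
  congr 1
  refine Finset.sum_congr rfl fun i _ => ?_
  rw [Real.norm_eq_abs, sq_abs]

lemma norm_euc' {n : ℕ} (x : EuclideanSpace ℝ (Fin n)) :
    ‖x‖ = Real.sqrt (∑ i, (x i) ^ 2) := by
  rw [EuclideanSpace.norm_eq]
  congr 1
  exact Finset.sum_congr rfl fun i _ => by rw [Real.norm_eq_abs, sq_abs]

lemma euclideanOpNorm_eq {m n : ℕ} (M : Matrix (Fin m) (Fin n) ℝ) (c : ℝ) (hc : 0 ≤ c)
    (hub : ∀ x : Fin n → ℝ, ∑ i, (M.mulVec x i) ^ 2 ≤ c ^ 2 * ∑ i, (x i) ^ 2)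
    (v : Fin n → ℝ) (hv : v ≠ 0)
    (hlow : ∑ i, (M.mulVec v i) ^ 2 = c ^ 2 * ∑ i, (v i) ^ 2) :
    euclideanOpNorm M = c := by
  unfold euclideanOpNorm
  apply le_antisymm
  · apply ContinuousLinearMap.opNorm_le_bound _ hc
    intro x
    rw [norm_toEuclideanLin_apply', norm_euc']
    calc Real.sqrt (∑ i, (M.mulVec (fun j => x j) i) ^ 2)
        ≤ Real.sqrt (c ^ 2 * ∑ i, (x i) ^ 2) := Real.sqrt_le_sqrt (hub _)
      _ = c * Real.sqrt (∑ i, (x i) ^ 2) := by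
          rw [Real.sqrt_mul (by positivity), Real.sqrt_sq hc]
  · set v' : EuclideanSpace ℝ (Fin n) := (WithLp.equiv 2 (Fin n → ℝ)).symm v with hv'
    have hv'n : v' ≠ 0 := by
      simp only [hv', ne_eq, EmbeddingLike.map_eq_zero_iff]
      exact fun h => hv (by simpa using congrArg (WithLp.equiv 2 (Fin n → ℝ)) h)
    have h1 : ‖LinearMap.toContinuousLinearMap (Matrix.toEuclideanLin M) v'‖ = c * ‖v'‖ := by
      rw [norm_toEuclideanLin_apply', norm_euc']
      have h2 : (fun j => v' j) = v := rfl
      rw [h2]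
      have h3 : ∑ i, (v' i) ^ 2 = ∑ i, (v i) ^ 2 := rfl
      rw [h3, hlow, Real.sqrt_mul (by positivity), Real.sqrt_sq hc]
    have h2 := ContinuousLinearMap.le_opNorm
      (LinearMap.toContinuousLinearMap (Matrix.toEuclideanLin M)) v'
    rw [h1] at h2
    exact le_of_mul_le_mul_right h2 (norm_pos_iff.mpr hv'n)


@[simp] lemma cons_val_five' {α : Type*} {m : ℕ} (x : α) (u : Fin (m + 5) → α) :
    Matrix.vecCons x u 5
      = Matrix.vecHead (Matrix.vecTail (Matrix.vecTail (Matrix.vecTail (Matrix.vecTail u)))) :=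
  rfl

set_option maxHeartbeats 1000000 in
lemma hub6 (α c : ℝ) (hα : 0 ≤ α) (ha : 2 + α ^ 2 ≤ c ^ 2) (hb : (1 + α) ^ 2 ≤ c ^ 2)
    (x : Fin 6 → ℝ) :
    ∑ i, ((!![0, 0, 0, 1, α, 1;
              0, 1, α, 0, 0, 0;
              0, α, 1, 0, 0, 0;
              1, 0, 0, 0, 0, 0;
              α, 0, 0, 0, 0, 0;
              1, 0, 0, 0, 0, 0]).mulVec x i) ^ 2 ≤ c ^ 2 * ∑ i, (x i) ^ 2 := by
  simp [Fin.sum_univ_six, Matrix.mulVec, dotProduct, Matrix.vecHead, Matrix.vecTail]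
  have h1 : (x 3 + α * x 4 + x 5) ^ 2 ≤ (2 + α ^ 2) * (x 3 ^ 2 + x 4 ^ 2 + x 5 ^ 2) := by
    nlinarith [sq_nonneg (α * x 3 - x 4), sq_nonneg (x 3 - x 5), sq_nonneg (α * x 5 - x 4)]
  have h2 : (x 1 + α * x 2) ^ 2 + (α * x 1 + x 2) ^ 2 ≤ (1 + α) ^ 2 * (x 1 ^ 2 + x 2 ^ 2) := by
    nlinarith [sq_nonneg (x 1 - x 2)]
  have e1 : (2 + α ^ 2) * (x 0 ^ 2 + x 3 ^ 2 + x 4 ^ 2 + x 5 ^ 2)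
      ≤ c ^ 2 * (x 0 ^ 2 + x 3 ^ 2 + x 4 ^ 2 + x 5 ^ 2) :=
    mul_le_mul_of_nonneg_right ha (by positivity)
  have e2 : (1 + α) ^ 2 * (x 1 ^ 2 + x 2 ^ 2) ≤ c ^ 2 * (x 1 ^ 2 + x 2 ^ 2) :=
    mul_le_mul_of_nonneg_right hb (by positivity)
  nlinarith [h1, h2, e1, e2]

/-- operator norms of the Hankel-type matrices attached to
`φ_α(z) = z₁² + α z₁z₂ + z₂²`. -/
theorem hankel_matrix_norms (α : ℝ) (hα : 0 ≤ α) :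
    euclideanOpNorm !![1, α; α, 1] = 1 + α ∧
    euclideanOpNorm !![1, α, 1] = Real.sqrt (2 + α ^ 2) ∧
    euclideanOpNorm !![0, 0, 0, 1, α, 1;
                       0, 1, α, 0, 0, 0;
                       0, α, 1, 0, 0, 0;
                       1, 0, 0, 0, 0, 0;
                       α, 0, 0, 0, 0, 0;
                       1, 0, 0, 0, 0, 0]
      = max (Real.sqrt (2 + α ^ 2)) (1 + α) := by
  have hs2 : (Real.sqrt (2 + α ^ 2)) ^ 2 = 2 + α ^ 2 := Real.sq_sqrt (by positivity)
  refine ⟨?_, ?_, ?_⟩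
  · apply euclideanOpNorm_eq _ (1 + α) (by linarith) ?_ ![1, 1] ?_ ?_
    · intro x
      simp [Fin.sum_univ_two, Fin.sum_univ_three, Fin.sum_univ_six, Matrix.mulVec, dotProduct, Matrix.vecHead, Matrix.vecTail]
      nlinarith [sq_nonneg (x 0 - x 1), sq_nonneg (x 0 + x 1), sq_nonneg (x 0), sq_nonneg (x 1)]
    · intro h; simpa using congrFun h 0
    · simp [Fin.sum_univ_two, Fin.sum_univ_three, Fin.sum_univ_six, Matrix.mulVec, dotProduct, Matrix.vecHead, Matrix.vecTail]
      ring
  · apply euclideanOpNorm_eq _ _ (Real.sqrt_nonneg _) ?_ ![1, α, 1] ?_ ?_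
    · intro x
      rw [hs2]
      simp [Fin.sum_univ_two, Fin.sum_univ_three, Fin.sum_univ_six, Matrix.mulVec, dotProduct, Matrix.vecHead, Matrix.vecTail]
      nlinarith [sq_nonneg (α * x 0 - x 1), sq_nonneg (x 0 - x 2), sq_nonneg (α * x 2 - x 1)]
    · intro h; simpa using congrFun h 0
    · rw [hs2]
      simp [Fin.sum_univ_two, Fin.sum_univ_three, Fin.sum_univ_six, Matrix.mulVec, dotProduct, Matrix.vecHead, Matrix.vecTail]
      ring
  · set c : ℝ := max (Real.sqrt (2 + α ^ 2)) (1 + α) with hcdef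
    have ha : 2 + α ^ 2 ≤ c ^ 2 := by
      rw [← hs2]
      exact pow_le_pow_left₀ (Real.sqrt_nonneg _) (le_max_left _ _) 2
    have hb : (1 + α) ^ 2 ≤ c ^ 2 :=
      pow_le_pow_left₀ (by linarith) (le_max_right _ _) 2
    have hc : 0 ≤ c := le_trans (Real.sqrt_nonneg _) (le_max_left _ _)
    have hub := hub6 α c hα ha hb
    rcases le_total (1 + α) (Real.sqrt (2 + α ^ 2)) with h | h
    · have hcs : c = Real.sqrt (2 + α ^ 2) := max_eq_left h
      apply euclideanOpNorm_eq _ c hc hub ![1, 0, 0, 0, 0, 0] ?_ ?_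
      · intro hz; simpa using congrFun hz 0
      · rw [hcs, hs2]
        simp [Fin.sum_univ_two, Fin.sum_univ_three, Fin.sum_univ_six, Matrix.mulVec, dotProduct, Matrix.vecHead, Matrix.vecTail]
        ring
    · have hcs : c = 1 + α := max_eq_right h
      apply euclideanOpNorm_eq _ c hc hub ![0, 1, 1, 0, 0, 0] ?_ ?_
      · intro hz; simpa using congrFun hz 1
      · rw [hcs]
        simp [Fin.sum_univ_two, Fin.sum_univ_three, Fin.sum_univ_six, Matrix.mulVec, dotProduct, Matrix.vecHead, Matrix.vecTail]
        ring
end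

section
/- Fix α ≥ 0 and define F_α : [0, ∞) → ℝ by F_α(β) = (2 + αβ)/√(2 + β²) for 0 ≤ β ≤ 1/2 and F_α(β) = (2 + αβ)/(1 + β) for β > 1/2. Then: (i) if 0 ≤ α ≤ 1/2, the supremum of F_α is attained at β = α with value √(2 + α²); (ii) if 1/2 < α ≤ 2, the supremum is attained at β = 1/2 with value (4 + α)/3; (iii) if α > 2, F_α is increasing with supremum (as β → ∞) equal to α. -/
open Filter

private lemma keyD (α x : ℝ) (h1 : 1/2 ≤ α) (hx0 : 0 ≤ x) (hx : x ≤ 1/2) :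
    9*(2+α*x)^2 ≤ (4+α)^2*(2+x^2) := by
  have h2 : (0:ℝ) ≤ 2*α^2+16*α-4 + (4*α^2-4*α-8)*x := by
    nlinarith [mul_nonneg (by linarith : (0:ℝ) ≤ 1-2*x) (by nlinarith : (0:ℝ) ≤ 2*α^2+16*α-4),
      mul_nonneg hx0 (by nlinarith [sq_nonneg (2*α-1)] : (0:ℝ) ≤ 4*α^2+14*α-8)]
  nlinarith [mul_nonneg (by linarith : (0:ℝ) ≤ 1-2*x) h2]

private lemma keyStrict (α x y : ℝ) (hα : 2 < α) (hx0 : 0 ≤ x) (hxy : x < y) (hy : y ≤ 1/2) :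
    (2+α*x)^2*(2+y^2) < (2+α*y)^2*(2+x^2) := by
  have hxy4 : x*y ≤ 1/4 := by nlinarith
  have hb : (0:ℝ) < 8*α + (2*α^2-4)*(x+y) - 4*α*x*y := by
    nlinarith [mul_nonneg (by linarith : (0:ℝ) ≤ α) (by linarith : (0:ℝ) ≤ 1 - 4*(x*y)),
      mul_nonneg (by linarith : (0:ℝ) ≤ x + y) (by nlinarith : (0:ℝ) ≤ 2*α^2 - 4)]
  nlinarith [mul_pos (by linarith : (0:ℝ) < y - x) hb]

/-- extremal analysis of `F_α(β) = (2 + αβ)/max(√(2 + β²), 1 + β)`. -/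
theorem Falpha_extremal (α : ℝ) (hα : 0 ≤ α)
    (F : ℝ → ℝ)
    (hF : ∀ β : ℝ, F β = if β ≤ 1 / 2 then (2 + α * β) / Real.sqrt (2 + β ^ 2)
      else (2 + α * β) / (1 + β)) :
    (α ≤ 1 / 2 → (∀ β ≥ (0:ℝ), F β ≤ F α) ∧ F α = Real.sqrt (2 + α ^ 2)) ∧
    (1 / 2 < α → α ≤ 2 → (∀ β ≥ (0:ℝ), F β ≤ F (1 / 2)) ∧ F (1 / 2) = (4 + α) / 3) ∧
    (2 < α → StrictMonoOn F (Set.Ici 0) ∧ Tendsto F atTop (nhds α)) := by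
  have hsq : ∀ β : ℝ, (0:ℝ) < Real.sqrt (2 + β ^ 2) := fun β =>
    Real.sqrt_pos.2 (by positivity)
  have hsqsq : ∀ β : ℝ, (Real.sqrt (2 + β ^ 2)) ^ 2 = 2 + β ^ 2 := fun β =>
    Real.sq_sqrt (by positivity)
  have hhalf : Real.sqrt (2 + (1/2:ℝ) ^ 2) = 3/2 := by
    rw [show (2:ℝ) + (1/2:ℝ)^2 = (3/2)^2 by norm_num, Real.sqrt_sq (by norm_num)]
  have hFhalf : F (1/2) = (4 + α) / 3 := by
    rw [hF, if_pos le_rfl, hhalf]; ring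
  refine ⟨?_, ?_, ?_⟩
  · -- Part (i)
    intro hα2
    have hFα : F α = Real.sqrt (2 + α ^ 2) := by
      rw [hF, if_pos hα2, show (2:ℝ) + α * α = 2 + α ^ 2 by ring, Real.div_sqrt]
    refine ⟨fun β hβ => ?_, hFα⟩
    rw [hFα]
    by_cases hβh : β ≤ 1/2
    · rw [hF, if_pos hβh, div_le_iff₀ (hsq β)]
      have hnn : (0:ℝ) ≤ Real.sqrt (2 + α ^ 2) * Real.sqrt (2 + β ^ 2) :=
        mul_nonneg (Real.sqrt_nonneg _) (Real.sqrt_nonneg _)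
      refine le_of_pow_le_pow_left₀ two_ne_zero hnn ?_
      rw [mul_pow, hsqsq, hsqsq]
      nlinarith [sq_nonneg (α - β), mul_nonneg hα hβ]
    · push_neg at hβh
      rw [hF, if_neg (not_le.2 hβh)]
      have step1 : (2 + α * β) / (1 + β) ≤ (4 + α) / 3 := by
        rw [div_le_div_iff₀ (by linarith) (by norm_num)]
        nlinarith [mul_nonneg (by linarith : (0:ℝ) ≤ 2 - α) (by linarith : (0:ℝ) ≤ 2*β - 1)]
      have step2 : (4 + α) / 3 ≤ Real.sqrt (2 + α ^ 2) := by
        refine le_of_pow_le_pow_left₀ two_ne_zero (Real.sqrt_nonneg _) ?_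
        rw [hsqsq]
        nlinarith [sq_nonneg (2*α - 1)]
      linarith
  · -- Part (ii)
    intro h1 h2
    refine ⟨fun β hβ => ?_, hFhalf⟩
    rw [hFhalf]
    by_cases hβh : β ≤ 1/2
    · rw [hF, if_pos hβh, div_le_iff₀ (hsq β)]
      have hnn : (0:ℝ) ≤ (4 + α) / 3 * Real.sqrt (2 + β ^ 2) :=
        mul_nonneg (by linarith) (Real.sqrt_nonneg _)
      refine le_of_pow_le_pow_left₀ two_ne_zero hnn ?_
      rw [mul_pow, hsqsq]
      nlinarith [keyD α β (le_of_lt h1) hβ hβh]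
    · push_neg at hβh
      rw [hF, if_neg (not_le.2 hβh), div_le_div_iff₀ (by linarith) (by norm_num)]
      nlinarith [mul_nonneg (by linarith : (0:ℝ) ≤ 2 - α) (by linarith : (0:ℝ) ≤ 2*β - 1)]
  · -- Part (iii)
    intro h2
    constructor
    · intro x hx y hy hxy
      simp only [Set.mem_Ici] at hx hy
      by_cases hxh : x ≤ 1/2
      · by_cases hyh : y ≤ 1/2
        · rw [hF, hF, if_pos hxh, if_pos hyh, div_lt_div_iff₀ (hsq x) (hsq y)]
          have hnn : (0:ℝ) ≤ (2 + α * y) * Real.sqrt (2 + x ^ 2) :=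
            mul_nonneg (by nlinarith [mul_nonneg (by linarith : (0:ℝ) ≤ α) hy])
              (Real.sqrt_nonneg _)
          refine lt_of_pow_lt_pow_left₀ 2 hnn ?_
          rw [mul_pow, mul_pow, hsqsq, hsqsq]
          exact keyStrict α x y h2 hx hxy hyh
        · push_neg at hyh
          have hx' : F x ≤ (4 + α) / 3 := by
            rw [hF, if_pos hxh, div_le_iff₀ (hsq x)]
            have hnn : (0:ℝ) ≤ (4 + α) / 3 * Real.sqrt (2 + x ^ 2) :=
              mul_nonneg (by linarith) (Real.sqrt_nonneg _)
            refine le_of_pow_le_pow_left₀ two_ne_zero hnn ?_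
            rw [mul_pow, hsqsq]
            nlinarith [keyD α x (by linarith) hx hxh]
          have hy' : (4 + α) / 3 < F y := by
            rw [hF, if_neg (not_le.2 hyh), div_lt_div_iff₀ (by norm_num) (by linarith)]
            nlinarith [mul_pos (by linarith : (0:ℝ) < α - 2) (by linarith : (0:ℝ) < 2*y - 1)]
          linarith
      · push_neg at hxh
        have hyh : ¬ y ≤ 1/2 := by push_neg; linarith
        rw [hF, hF, if_neg (not_le.2 hxh), if_neg hyh,
          div_lt_div_iff₀ (by linarith) (by linarith)]
        nlinarith [mul_pos (by linarith : (0:ℝ) < α - 2) (by linarith : (0:ℝ) < y - x)]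
    · have ha : Tendsto (fun β : ℝ => 1 + β) atTop atTop :=
        tendsto_atTop_add_const_left _ 1 tendsto_id
      have hb : Tendsto (fun β : ℝ => (1 + β)⁻¹) atTop (nhds 0) := ha.inv_tendsto_atTop
      have hlim : Tendsto (fun β : ℝ => α + (2 - α) * (1 + β)⁻¹) atTop
          (nhds (α + (2 - α) * 0)) := tendsto_const_nhds.add (hb.const_mul _)
      have hev : (fun β : ℝ => α + (2 - α) * (1 + β)⁻¹) =ᶠ[atTop] F := by
        filter_upwards [eventually_ge_atTop (1:ℝ)] with β hβ
        rw [hF, if_neg (by linarith)]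
        have : (1:ℝ) + β ≠ 0 := by linarith
        field_simp
        ring
      have := hlim.congr' hev
      simpa using this
end

section
/- For 1/2 ≤ α ≤ 2, the identity z₁² + α z₁z₂ + z₂² = (2/3)(α − 1/2)(z₁ + z₂)² + (2/3)(2 − α)(z₁² + (1/2) z₁z₂ + z₂²) holds as polynomials, and the quantity (2/3)(α − 1/2)·‖z₁+z₂‖²_{H²} + (2/3)(2 − α)·‖z₁² + (1/2)z₁z₂ + z₂²‖_{H²}·1 equals (4 + α)/3, where ‖z₁+z₂‖_{H²} = √2 and ‖z₁² + (1/2)z₁z₂ + z₂²‖_{H²} = 3/2. -/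
/-- the weak factorization identity for `φ_α` when `1/2 ≤ α ≤ 2`, and the
computation of its cost `(4 + α)/3`. -/
theorem weak_factorization_middle_range (α : ℝ) (hα₁ : 1 / 2 ≤ α) (hα₂ : α ≤ 2) :
    (∀ z₁ z₂ : ℂ,
      z₁ ^ 2 + (α : ℂ) * z₁ * z₂ + z₂ ^ 2
        = ((2 / 3 : ℂ) * ((α : ℂ) - 1 / 2)) * (z₁ + z₂) * (z₁ + z₂)
          + ((2 / 3 : ℂ) * (2 - (α : ℂ))) * (z₁ ^ 2 + z₁ * z₂ / 2 + z₂ ^ 2) * 1) ∧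
    (2 / 3 * (α - 1 / 2)) * Real.sqrt 2 ^ 2 + (2 / 3 * (2 - α)) * (3 / 2) * 1
      = (4 + α) / 3 ∧
    Real.sqrt (1 ^ 2 + 1 ^ 2) = Real.sqrt 2 ∧
    Real.sqrt (1 ^ 2 + (1 / 2) ^ 2 + 1 ^ 2) = 3 / 2 := by
  refine ⟨fun z₁ z₂ => by ring, ?_, by norm_num, ?_⟩
  · rw [Real.sq_sqrt (by norm_num : (2:ℝ) ≥ 0)]; ring
  · rw [show (1:ℝ)^2 + (1/2)^2 + 1^2 = (3/2)^2 by norm_num]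
    exact Real.sqrt_sq (by norm_num)
end

section
/- For every α ≥ 0, the quantity max(√(2+α²), 1+α) · N(α) = 2 + α², where N(α) = √(2+α²) for 0 ≤ α ≤ 1/2, N(α) = (4+α)/3 for 1/2 < α ≤ 2, and N(α) = α for α > 2, holds if and only if 0 ≤ α ≤ 1/2 or α = 2. -/
/-- with `N(α) = ‖φ_α‖_{W(T²)}` given piecewise, the Hilbert point equation
`max(√(2+α²), 1+α)·N(α) = 2 + α²` holds iff `0 ≤ α ≤ 1/2` or `α = 2`. -/
theorem hilbert_point_weak_product_iff (α : ℝ) (hα : 0 ≤ α)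
    (N : ℝ → ℝ)
    (hN : ∀ a : ℝ, N a = if a ≤ 1 / 2 then Real.sqrt (2 + a ^ 2)
      else if a ≤ 2 then (4 + a) / 3 else a) :
    max (Real.sqrt (2 + α ^ 2)) (1 + α) * N α = 2 + α ^ 2 ↔ α ≤ 1 / 2 ∨ α = 2 := by
  have hpos : (0:ℝ) ≤ 2 + α ^ 2 := by positivity
  rw [hN α]
  split_ifs with h1 h2
  · -- α ≤ 1/2
    have hmax : max (Real.sqrt (2 + α ^ 2)) (1 + α) = Real.sqrt (2 + α ^ 2) := by
      apply max_eq_left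
      rw [show (2:ℝ) + α ^ 2 = (1+α)^2 + (1 - 2*α) by ring]
      have : (0:ℝ) ≤ 1 - 2*α := by linarith
      calc 1 + α = Real.sqrt ((1+α)^2) := (Real.sqrt_sq (by linarith)).symm
        _ ≤ _ := Real.sqrt_le_sqrt (by linarith)
    rw [hmax, Real.mul_self_sqrt hpos]
    exact iff_of_true rfl (Or.inl h1)
  · -- 1/2 < α ≤ 2
    push_neg at h1
    have hmax : max (Real.sqrt (2 + α ^ 2)) (1 + α) = 1 + α := by
      apply max_eq_right
      calc Real.sqrt (2 + α ^ 2) ≤ Real.sqrt ((1+α)^2) :=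
            Real.sqrt_le_sqrt (by nlinarith)
        _ = 1 + α := Real.sqrt_sq (by linarith)
    rw [hmax]
    constructor
    · intro h
      right
      nlinarith
    · rintro (h | h)
      · linarith
      · subst h; norm_num
  · -- α > 2
    push_neg at h1 h2
    have hmax : max (Real.sqrt (2 + α ^ 2)) (1 + α) = 1 + α := by
      apply max_eq_right
      calc Real.sqrt (2 + α ^ 2) ≤ Real.sqrt ((1+α)^2) :=
            Real.sqrt_le_sqrt (by nlinarith)
        _ = 1 + α := Real.sqrt_sq (by linarith)
    rw [hmax]
    constructor
    · intro h; nlinarith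
    · rintro (h | h) <;> linarith
end
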